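/- Let N ≥ 1 and κ = 1/√2. For a ∈ ℝ and r > 0 define S(a,r) = sinh(a·r)/a if a ≠ 0 and S(0,r) = r. Then for every ς ∈ ℝ^N with ς₁² + ⋯ + ς_N² = 1 and every r > 0, writing κ_ij = (ς_i − ς_j)/2, one has ∏_{1 ≤ i < j ≤ N} S(κ_ij, r) ≤ (sinh(κ·r)/κ)^{N(N−1)/2}. -/

import Mathlib

/-- `S a r = sinh (a r) / a`, extended by continuity to `S 0 r = r`. -/
noncomputable def Ssinh (a r : ℝ) : ℝ := if a = 0 then r else Real.sinh (a * r) / a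

private lemma sinh_lt_mul_cosh {x : ℝ} (hx : 0 < x) : Real.sinh x < x * Real.cosh x := by
  have key : StrictMonoOn (fun x => x * Real.cosh x - Real.sinh x) (Set.Ici 0) := by
    apply strictMonoOn_of_deriv_pos (convex_Ici 0)
    · fun_prop
    · intro y hy
      rw [interior_Ici] at hy
      have h1 : HasDerivAt (fun x => x * Real.cosh x - Real.sinh x) (y * Real.sinh y) y := by
        have := ((hasDerivAt_id y).mul (Real.hasDerivAt_cosh y)).sub (Real.hasDerivAt_sinh y)
        exact this.congr_deriv (by simp [mul_comm])
      rw [h1.deriv]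
      exact mul_pos hy (Real.sinh_pos_iff.2 hy)
  have := key (Set.self_mem_Ici) (Set.mem_Ici.2 hx.le) hx
  simpa using this

private lemma sinh_div_mono : MonotoneOn (fun x => Real.sinh x / x) (Set.Ioi 0) := by
  apply monotoneOn_of_deriv_nonneg (convex_Ioi 0)
  · apply ContinuousOn.div Real.continuous_sinh.continuousOn continuousOn_id
    intro x hx; exact ne_of_gt hx
  · intro y hy
    rw [interior_Ioi] at hy
    have hy0 : (y : ℝ) ≠ 0 := ne_of_gt hy
    exact ((Real.hasDerivAt_sinh y).div (hasDerivAt_id y) hy0).differentiableAt.differentiableWithinAt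
  · intro y hy
    rw [interior_Ioi] at hy
    have hy0 : (y : ℝ) ≠ 0 := ne_of_gt hy
    have h1 : HasDerivAt (fun x => Real.sinh x / x) ((Real.cosh y * y - Real.sinh y * 1) / y ^ 2) y :=
      (Real.hasDerivAt_sinh y).div (hasDerivAt_id y) hy0
    rw [h1.deriv]
    apply div_nonneg _ (sq_nonneg y)
    nlinarith [sinh_lt_mul_cosh hy]

private lemma Ssinh_neg (a r : ℝ) : Ssinh (-a) r = Ssinh a r := by
  unfold Ssinh
  by_cases h : a = 0
  · simp [h]
  · rw [if_neg (neg_ne_zero.2 h), if_neg h]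
    rw [neg_mul, Real.sinh_neg, neg_div_neg_eq]

private lemma Ssinh_pos {a r : ℝ} (hr : 0 < r) : 0 < Ssinh a r := by
  unfold Ssinh
  by_cases h : a = 0
  · simpa [h]
  · rw [if_neg h]
    rcases lt_or_gt_of_ne h with ha | ha
    · exact div_pos_of_neg_of_neg (Real.sinh_neg_iff.2 (mul_neg_of_neg_of_pos ha hr)) ha
    · exact div_pos (Real.sinh_pos_iff.2 (mul_pos ha hr)) ha

private lemma Ssinh_le {a b r : ℝ} (hr : 0 < r) (hb : 0 < b) (hab : |a| ≤ b) :
    Ssinh a r ≤ Ssinh b r := by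
  have hSb : Ssinh b r = Real.sinh (b * r) / b := by
    unfold Ssinh; rw [if_neg (ne_of_gt hb)]
  -- reduce to |a| case
  rcases abs_cases a with ⟨ha, _⟩ | ⟨ha, _⟩
  all_goals rw [show Ssinh a r = Ssinh |a| r by rw [ha]; try rw [Ssinh_neg]]
  all_goals {
    set c := |a| with hc
    have hc0 : 0 ≤ c := abs_nonneg a
    rcases eq_or_lt_of_le hc0 with hc00 | hcpos
    · rw [show Ssinh c r = r by unfold Ssinh; rw [if_pos hc00.symm], hSb, le_div_iff₀ hb]
      calc r * b = b * r := mul_comm r b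
        _ ≤ Real.sinh (b * r) := Real.self_le_sinh_iff.2 (le_of_lt (mul_pos hb hr))
    · have hSc : Ssinh c r = Real.sinh (c * r) / c := by
        unfold Ssinh; rw [if_neg (ne_of_gt hcpos)]
      have hmono := sinh_div_mono (Set.mem_Ioi.2 (mul_pos hcpos hr))
        (Set.mem_Ioi.2 (mul_pos hb hr)) (mul_le_mul_of_nonneg_right hab hr.le)
      simp only at hmono
      have h1 : Real.sinh (c * r) / (c * r) ≤ Real.sinh (b * r) / (b * r) := hmono
      rw [hSc, hSb]
      rw [div_le_div_iff₀ (mul_pos hcpos hr) (mul_pos hb hr)] at h1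
      rw [div_le_div_iff₀ hcpos hb]
      nlinarith
  }

private lemma card_lt_pairs (N : ℕ) :
    (Finset.univ.filter fun q : Fin N × Fin N => q.1 < q.2).card = N * (N - 1) / 2 := by
  rw [Finset.card_eq_sum_card_fiberwise (f := Prod.snd) (t := Finset.univ)
    (fun _ _ => Finset.mem_univ _)]
  have hfib : ∀ j : Fin N,
      ((Finset.univ.filter fun q : Fin N × Fin N => q.1 < q.2).filter
        fun q => q.snd = j).card = (j : ℕ) := by
    intro j
    have : ((Finset.univ.filter fun q : Fin N × Fin N => q.1 < q.2).filter
        fun q => q.snd = j) = (Finset.Iio j).image (fun i => (i, j)) := by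
      ext ⟨a, b⟩
      simp only [Finset.mem_filter, Finset.mem_univ, true_and, Finset.mem_image,
        Finset.mem_Iio, Prod.mk.injEq]
      constructor
      · rintro ⟨h1, h2⟩; exact ⟨a, h2 ▸ h1, rfl, h2.symm⟩
      · rintro ⟨i, hi, rfl, rfl⟩; exact ⟨hi, rfl⟩
    rw [this, Finset.card_image_of_injective _ (fun x y h => (Prod.mk.injEq _ _ _ _ ▸ h).1),
      Fin.card_Iio]
  rw [Finset.sum_congr rfl (fun j _ => hfib j)]
  rw [Fin.sum_univ_eq_sum_range (fun i => i), Finset.sum_range_id]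

/-- The sharper volume comparison inequality used by the `sharp CURS' algorithm:
the product over pairs `i < j` alone is bounded by `(sinh(κ r)/κ)^{N(N-1)/2}`
with `κ = 1/√2`. -/
theorem sharp_volume_comparison_spd {N : ℕ} (hN : 1 ≤ N)
    (ς : Fin N → ℝ) (hς : ∑ i, ς i ^ 2 = 1) (r : ℝ) (hr : 0 < r) :
    (∏ q ∈ Finset.univ.filter (fun q : Fin N × Fin N => q.1 < q.2),
        Ssinh ((ς q.1 - ς q.2) / 2) r)
      ≤ (Real.sinh ((1 / Real.sqrt 2) * r) / (1 / Real.sqrt 2)) ^ (N * (N - 1) / 2) := by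
  have hκ : (0:ℝ) < 1 / Real.sqrt 2 := by positivity
  have hbound : ∀ q ∈ Finset.univ.filter (fun q : Fin N × Fin N => q.1 < q.2),
      Ssinh ((ς q.1 - ς q.2) / 2) r ≤ Ssinh (1 / Real.sqrt 2) r := by
    rintro ⟨i, j⟩ hq
    simp only [Finset.mem_filter, Finset.mem_univ, true_and] at hq
    apply Ssinh_le hr hκ
    -- |(ς i - ς j)/2| ≤ 1/√2
    have hsub : ς i ^ 2 + ς j ^ 2 ≤ 1 := by
      rw [← hς]
      have : ({i, j} : Finset (Fin N)) ⊆ Finset.univ := Finset.subset_univ _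
      calc ς i ^ 2 + ς j ^ 2 = ∑ k ∈ ({i, j} : Finset (Fin N)), ς k ^ 2 := by
            rw [Finset.sum_pair (ne_of_lt hq)]
        _ ≤ ∑ k, ς k ^ 2 := Finset.sum_le_sum_of_subset_of_nonneg this
            (fun k _ _ => sq_nonneg _)
    have hsq : ((ς i - ς j) / 2) ^ 2 ≤ (1 / Real.sqrt 2) ^ 2 := by
      have h2 : (1 / Real.sqrt 2 : ℝ) ^ 2 = 1 / 2 := by
        rw [div_pow, one_pow, Real.sq_sqrt (by norm_num : (0:ℝ) ≤ 2)]
      rw [h2]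
      nlinarith [sq_nonneg (ς i + ς j), sq_nonneg (ς i - ς j)]
    show |(ς i - ς j) / 2| ≤ 1 / Real.sqrt 2
    calc |(ς i - ς j) / 2| = Real.sqrt (((ς i - ς j) / 2) ^ 2) := (Real.sqrt_sq_eq_abs _).symm
      _ ≤ Real.sqrt ((1 / Real.sqrt 2) ^ 2) := Real.sqrt_le_sqrt hsq
      _ = |1 / Real.sqrt 2| := Real.sqrt_sq_eq_abs _
      _ = 1 / Real.sqrt 2 := abs_of_pos hκ
  have hS : Ssinh (1 / Real.sqrt 2) r = Real.sinh ((1 / Real.sqrt 2) * r) / (1 / Real.sqrt 2) := by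
    unfold Ssinh; rw [if_neg (ne_of_gt hκ)]
  calc (∏ q ∈ Finset.univ.filter (fun q : Fin N × Fin N => q.1 < q.2),
        Ssinh ((ς q.1 - ς q.2) / 2) r)
      ≤ ∏ _q ∈ Finset.univ.filter (fun q : Fin N × Fin N => q.1 < q.2),
        Ssinh (1 / Real.sqrt 2) r :=
        Finset.prod_le_prod (fun q _ => (Ssinh_pos hr).le) hbound
    _ = Ssinh (1 / Real.sqrt 2) r ^ (N * (N - 1) / 2) := by
        rw [Finset.prod_const, card_lt_pairs]
    _ = (Real.sinh ((1 / Real.sqrt 2) * r) / (1 / Real.sqrt 2)) ^ (N * (N - 1) / 2) := by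
        rw [hS]
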